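/- Let K be a continuous positive-definite kernel on a compact Ω with RKHS H_K(Ω) and orthonormal basis {φ_ℓ}_{ℓ=1}^∞. Let X_n ⊂ Ω be n distinct points such that the matrix Φ_{X_n} = (φ_m(x_k)) is invertible, and let Λ_φ(X_n) be the Lebesgue constant of interpolation in span{φ_1,...,φ_n}. Then for any f ∈ H_K(Ω), the interpolant s_f^φ to f at X_n from span{φ_1,...,φ_n} satisfies |f(x) − s_f^φ(x)| ≤ ‖f‖_{H_K(Ω)} (1 + Λ_φ(X_n)) sup_{y∈Ω} (Σ_{ℓ=n+1}^∞ φ_ℓ(y)^2)^{1/2} for all x ∈ Ω. -/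

import Mathlib

/-- Cauchy–Schwarz for tsums over `ℕ` in `ℝ`. -/
lemma tsum_cauchy_schwarz (a b : ℕ → ℝ)
    (ha : Summable (fun ℓ => a ℓ ^ 2)) (hb : Summable (fun ℓ => b ℓ ^ 2)) :
    |∑' ℓ, a ℓ * b ℓ| ≤ Real.sqrt (∑' ℓ, a ℓ ^ 2) * Real.sqrt (∑' ℓ, b ℓ ^ 2) := by
  have habs : Summable (fun ℓ => |a ℓ| * |b ℓ|) := by
    refine Summable.of_nonneg_of_le (fun ℓ => by positivity) (fun ℓ => ?_)
      ((ha.add hb).div_const 2)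
    nlinarith [sq_nonneg (|a ℓ| - |b ℓ|), sq_abs (a ℓ), sq_abs (b ℓ)]
  have hab : Summable (fun ℓ => a ℓ * b ℓ) := by
    refine Summable.of_abs ?_
    simpa [abs_mul] using habs
  have h1 : |∑' ℓ, a ℓ * b ℓ| ≤ ∑' ℓ, |a ℓ| * |b ℓ| := by
    have := norm_tsum_le_tsum_norm (f := fun ℓ => a ℓ * b ℓ) (by simpa [abs_mul] using habs)
    simpa [abs_mul] using this
  refine h1.trans ?_
  refine habs.tsum_le_of_sum_le fun t => ?_
  calc ∑ i ∈ t, |a i| * |b i|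
      ≤ Real.sqrt (∑ i ∈ t, |a i| ^ 2) * Real.sqrt (∑ i ∈ t, |b i| ^ 2) :=
        Real.sum_mul_le_sqrt_mul_sqrt t _ _
    _ ≤ Real.sqrt (∑' ℓ, a ℓ ^ 2) * Real.sqrt (∑' ℓ, b ℓ ^ 2) := by
        refine mul_le_mul (Real.sqrt_le_sqrt ?_) (Real.sqrt_le_sqrt ?_)
          (Real.sqrt_nonneg _) (Real.sqrt_nonneg _)
        · simpa [sq_abs] using ha.sum_le_tsum t (fun i _ => sq_nonneg (a i))
        · simpa [sq_abs] using hb.sum_le_tsum t (fun i _ => sq_nonneg (b i))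

/-- uniform bound for the interpolant `s` to `f` from the span of the first
`n` basis functions at points `x_1,…,x_n`, in terms of the Lebesgue constant `Λ` of the
Lagrange basis functions `u_k` and the uniform tail `S` of the expansion of the kernel. -/
theorem basis_interpolant_error_bound
    {X : Type*} (Ω : Set X) (φ : ℕ → X → ℝ) (f : X → ℝ) (c : ℕ → ℝ)
    -- f ∈ H_K(Ω): square-summable coefficients, pointwise convergent expansion
    (hc : Summable (fun ℓ => (c ℓ) ^ 2))
    (hφ : ∀ x ∈ Ω, Summable (fun ℓ => (φ ℓ x) ^ 2))
    (hf : ∀ x ∈ Ω, HasSum (fun ℓ => c ℓ * φ ℓ x) (f x))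
    (n : ℕ) (pts : Fin n → X) (hpts : ∀ k, pts k ∈ Ω)
    -- Lagrange basis functions u_k ∈ span{φ_0,…,φ_{n-1}} with u_k(x_m) = δ_{km}
    (u : Fin n → X → ℝ)
    (hu_span : ∀ k, ∃ a : Fin n → ℝ, ∀ x, u k x = ∑ m, a m * φ (m : ℕ) x)
    (hu_card : ∀ k m, u k (pts m) = if k = m then (1 : ℝ) else 0)
    -- the interpolant s ∈ span{φ_0,…,φ_{n-1}} to f at the points
    (s : X → ℝ)
    (hs_span : ∃ a : Fin n → ℝ, ∀ x, s x = ∑ m, a m * φ (m : ℕ) x)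
    (hs_interp : ∀ k, s (pts k) = f (pts k))
    -- Lebesgue constant and uniform tail bound
    (Λ S : ℝ)
    (hΛ : ∀ x ∈ Ω, ∑ k, |u k x| ≤ Λ)
    (hS : ∀ x ∈ Ω, Real.sqrt (∑' ℓ, (φ (n + ℓ) x) ^ 2) ≤ S) :
    ∀ x ∈ Ω, |f x - s x| ≤ Real.sqrt (∑' ℓ, (c ℓ) ^ 2) * (1 + Λ) * S := by
  classical
  choose a ha using hu_span
  obtain ⟨b, hb⟩ := hs_span
  intro x hx
  -- the tail remainder
  set r : X → ℝ := fun y => ∑' ℓ, c (n + ℓ) * φ (n + ℓ) y with hr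
  have htail : ∀ y ∈ Ω, HasSum (fun ℓ => c (n + ℓ) * φ (n + ℓ) y)
      (f y - ∑ m : Fin n, c (m : ℕ) * φ (m : ℕ) y) := by
    intro y hy
    have h1 : HasSum (fun ℓ => c (ℓ + n) * φ (ℓ + n) y)
        (f y - ∑ i ∈ Finset.range n, c i * φ i y) := by
      exact (hasSum_nat_add_iff' (f := fun ℓ => c ℓ * φ ℓ y) n).2 (hf y hy)
    have h2 : HasSum (fun ℓ => c (n + ℓ) * φ (n + ℓ) y)
        (f y - ∑ i ∈ Finset.range n, c i * φ i y) := by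
      simpa [add_comm] using h1
    simpa [Fin.sum_univ_eq_sum_range (fun i => c i * φ i y) n] using h2
  have hr_eq : ∀ y ∈ Ω, r y = f y - ∑ m : Fin n, c (m : ℕ) * φ (m : ℕ) y :=
    fun y hy => (htail y hy).tsum_eq
  -- bound on the remainder
  have hS0 : 0 ≤ S := le_trans (Real.sqrt_nonneg _) (hS x hx)
  have hM : ∀ y ∈ Ω, |r y| ≤ Real.sqrt (∑' ℓ, (c ℓ) ^ 2) * S := by
    intro y hy
    have hsa : Summable (fun ℓ => c (n + ℓ) ^ 2) := by
      have := (summable_nat_add_iff n).2 hc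
      simpa [add_comm] using this
    have hsb : Summable (fun ℓ => φ (n + ℓ) y ^ 2) := by
      have := (summable_nat_add_iff n).2 (hφ y hy)
      simpa [add_comm] using this
    have hcs := tsum_cauchy_schwarz (fun ℓ => c (n + ℓ)) (fun ℓ => φ (n + ℓ) y) hsa hsb
    refine hcs.trans ?_
    refine mul_le_mul (Real.sqrt_le_sqrt ?_) (hS y hy) (Real.sqrt_nonneg _) (Real.sqrt_nonneg _)
    have h3 : ∑ i ∈ Finset.range n, c i ^ 2 + ∑' ℓ, c (ℓ + n) ^ 2 = ∑' ℓ, c ℓ ^ 2 :=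
      hc.sum_add_tsum_nat_add n
    have h4 : (∑' ℓ, c (n + ℓ) ^ 2) = ∑' ℓ, c (ℓ + n) ^ 2 := by simp [add_comm]
    have h5 : 0 ≤ ∑ i ∈ Finset.range n, c i ^ 2 :=
      Finset.sum_nonneg fun i _ => sq_nonneg _
    linarith
  -- matrix identities
  let A : Matrix (Fin n) (Fin n) ℝ := Matrix.of fun k m => a k m
  let Φm : Matrix (Fin n) (Fin n) ℝ := Matrix.of fun k m => φ (m : ℕ) (pts k)
  have hAΦ : A * Φm.transpose = 1 := by
    ext k j
    have h := hu_card k j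
    rw [ha k (pts j)] at h
    simpa [Matrix.mul_apply, Matrix.one_apply, A, Φm] using h
  have hΦA : Φm.transpose * A = 1 := mul_eq_one_comm.mp hAΦ
  have hentry : ∀ j m : Fin n, (∑ k, φ (j : ℕ) (pts k) * a k m) = if j = m then (1 : ℝ) else 0 := by
    intro j m
    have h := congrFun (congrFun hΦA j) m
    simpa [Matrix.mul_apply, Matrix.one_apply, A, Φm, Matrix.transpose_apply] using h
  -- reproduction of span elements by the Lagrange basis
  set d : Fin n → ℝ := fun m => b m - c (m : ℕ) with hd
  set g : X → ℝ := fun y => s y - ∑ m : Fin n, c (m : ℕ) * φ (m : ℕ) y with hgdef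
  have hg : ∀ y, g y = ∑ m, d m * φ (m : ℕ) y := by
    intro y
    simp [g, hb y, d, sub_mul, Finset.sum_sub_distrib]
  have key : ∑ k, g (pts k) * u k x
      = ∑ j : Fin n, ∑ m : Fin n,
        (∑ k : Fin n, φ (j : ℕ) (pts k) * a k m) * (d j * φ (m : ℕ) x) := by
    simp_rw [hg, ha, Finset.sum_mul, Finset.mul_sum]
    rw [Finset.sum_comm]
    refine Finset.sum_congr rfl fun j _ => ?_
    rw [Finset.sum_comm]
    refine Finset.sum_congr rfl fun m _ => ?_
    exact Finset.sum_congr rfl fun k _ => by ring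
  have hrepr : g x = ∑ k, g (pts k) * u k x := by
    rw [key]
    simp only [hentry, ite_mul, one_mul, zero_mul]
    simp [Finset.sum_ite_eq, hg x]
  have hgr : ∀ k, g (pts k) = r (pts k) := by
    intro k
    rw [hr_eq (pts k) (hpts k)]
    simp [g, hs_interp k]
  have hfs : f x - s x = r x - ∑ k, r (pts k) * u k x := by
    have hgx : g x = ∑ k, r (pts k) * u k x := by
      rw [hrepr]
      exact Finset.sum_congr rfl fun k _ => by rw [hgr]
    have hgx' : g x = s x - ∑ m : Fin n, c (m : ℕ) * φ (m : ℕ) x := rfl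
    have h1 := hr_eq x hx
    linarith [hgx]
  -- final estimate
  set M : ℝ := Real.sqrt (∑' ℓ, (c ℓ) ^ 2) * S with hMdef
  have hM0 : 0 ≤ M := mul_nonneg (Real.sqrt_nonneg _) hS0
  calc |f x - s x| = |r x - ∑ k, r (pts k) * u k x| := by rw [hfs]
    _ ≤ |r x| + |∑ k, r (pts k) * u k x| := abs_sub _ _
    _ ≤ M + ∑ k, |r (pts k)| * |u k x| := by
        refine add_le_add (hM x hx) ?_
        refine (Finset.abs_sum_le_sum_abs _ _).trans ?_
        exact le_of_eq (Finset.sum_congr rfl fun k _ => abs_mul _ _)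
    _ ≤ M + ∑ k, M * |u k x| := by
        refine add_le_add_right (Finset.sum_le_sum fun k _ => ?_) M
        exact mul_le_mul_of_nonneg_right (hM (pts k) (hpts k)) (abs_nonneg _)
    _ = M + M * ∑ k, |u k x| := by rw [Finset.mul_sum]
    _ ≤ M + M * Λ := by
        refine add_le_add_right (mul_le_mul_of_nonneg_left (hΛ x hx) hM0) M
    _ = Real.sqrt (∑' ℓ, (c ℓ) ^ 2) * (1 + Λ) * S := by rw [hMdef]; ring
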